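/- Let T be a finite rooted tree with positive edge weights and let M* be constructed by the recursive top-down activation rule of the T-MWM algorithm. Then the total weight of M* equals max(F(root), G(root)); in particular M* is a maximum weight matching of T. -/

import Mathlib

/-- A finite rooted tree on the vertex type `V`, encoded by a parent function together
with a depth function certifying acyclicity. The edges are the pairs
`(parent c, c)` for `c ≠ root`; an edge is identified with its child endpoint `c`. -/
structure RTree (V : Type*) where
  root : V
  parent : V → V
  parent_root : parent root = root
  depth : V → ℕ
  depth_root : depth root = 0
  depth_parent : ∀ v, v ≠ root → depth (parent v) + 1 = depth v

namespace RTree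

variable {V : Type*} [Fintype V] [DecidableEq V]

/-- `u` lies in the subtree rooted at `v` (i.e. `u` is `v` or a descendant of `v`). -/
def Desc (T : RTree V) (v u : V) : Prop := ∃ k, T.parent^[k] u = v

/-- The children of `v`. -/
def children (T : RTree V) (v : V) : Finset V :=
  Finset.univ.filter fun c => T.parent c = v ∧ c ≠ T.root

/-- A finset `M` of non-root vertices, each `c ∈ M` representing the tree edge
`(parent c, c)`, is a matching if the corresponding edges are pairwise
vertex-disjoint. -/
def IsTreeMatching (T : RTree V) (M : Finset V) : Prop :=
  (∀ c ∈ M, c ≠ T.root) ∧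
  ∀ c ∈ M, ∀ c' ∈ M, c ≠ c' →
    T.parent c ≠ T.parent c' ∧ T.parent c ≠ c' ∧ c ≠ T.parent c'

/-- A matching all of whose edges lie in the subtree rooted at `v`. -/
def IsSubtreeMatching (T : RTree V) (v : V) (M : Finset V) : Prop :=
  T.IsTreeMatching M ∧ ∀ c ∈ M, T.Desc v c ∧ c ≠ v

/-- The weight of a matching: the sum of the weights of its edges, where `w c` is
the weight of the edge `(parent c, c)`. -/
noncomputable def wSum (w : V → ℝ) (M : Finset V) : ℝ := ∑ c ∈ M, w c

/-- `F(v)`: the maximum weight of a matching of the subtree rooted at `v` that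
contains an edge from `v` to one of its children (the max over the empty set,
e.g. at leaves, is `0` by the real `sSup` convention). -/
noncomputable def Fval (T : RTree V) (w : V → ℝ) (v : V) : ℝ :=
  sSup {x | ∃ M, T.IsSubtreeMatching v M ∧ (∃ c ∈ M, T.parent c = v) ∧ x = wSum w M}

/-- `G(v)`: the maximum weight of a matching of the subtree rooted at `v` that
contains no edge incident to `v`. -/
noncomputable def Gval (T : RTree V) (w : V → ℝ) (v : V) : ℝ :=
  sSup {x | ∃ M, T.IsSubtreeMatching v M ∧ (∀ c ∈ M, T.parent c ≠ v) ∧ x = wSum w M}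

set_option linter.unusedSectionVars false
set_option linter.unusedVariables false

variable (T : RTree V)

lemma depth_eq_zero_iff {u : V} : T.depth u = 0 ↔ u = T.root := by
  constructor
  · intro h
    by_contra hne
    have := T.depth_parent u hne
    omega
  · rintro rfl; exact T.depth_root

lemma iterate_parent_root (k : ℕ) : T.parent^[k] T.root = T.root := by
  induction k with
  | zero => rfl
  | succ n ih => rw [Function.iterate_succ_apply, T.parent_root, ih]

lemma iterate_depth_parent (u : V) : T.parent^[T.depth u] u = T.root := by
  generalize hd : T.depth u = d
  induction d generalizing u with
  | zero => simpa using (T.depth_eq_zero_iff.mp hd)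
  | succ n ih =>
    by_cases hu : u = T.root
    · subst hu; exact T.iterate_parent_root _
    · have hp := T.depth_parent u hu
      rw [Function.iterate_succ_apply]
      exact ih _ (by omega)

lemma depth_iterate (u : V) (k : ℕ) (hk : k ≤ T.depth u) :
    T.depth (T.parent^[k] u) = T.depth u - k := by
  induction k with
  | zero => simp
  | succ n ih =>
    have hn : n ≤ T.depth u := by omega
    have h1 : T.depth (T.parent^[n] u) = T.depth u - n := ih hn
    have hne : T.parent^[n] u ≠ T.root := by
      intro h
      rw [h, T.depth_root] at h1
      omega
    have h2 := T.depth_parent _ hne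
    rw [Function.iterate_succ_apply']
    omega

lemma iterate_ge_depth (u : V) (k : ℕ) (hk : T.depth u ≤ k) :
    T.parent^[k] u = T.root := by
  have : k = (k - T.depth u) + T.depth u := by omega
  rw [this, Function.iterate_add_apply, T.iterate_depth_parent, T.iterate_parent_root]

lemma desc_refl (v : V) : T.Desc v v := ⟨0, rfl⟩

lemma desc_trans {x v u : V} (h1 : T.Desc x v) (h2 : T.Desc v u) : T.Desc x u := by
  obtain ⟨j, hj⟩ := h1; obtain ⟨k, hk⟩ := h2
  exact ⟨j + k, by rw [Function.iterate_add_apply, hk, hj]⟩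

lemma desc_canonical {v u : V} (h : T.Desc v u) :
    v = T.root ∨ (T.depth v ≤ T.depth u ∧ T.parent^[T.depth u - T.depth v] u = v) := by
  obtain ⟨k, hk⟩ := h
  by_cases hku : k ≤ T.depth u
  · have := T.depth_iterate u k hku
    rw [hk] at this
    right
    constructor
    · omega
    · have : T.depth u - T.depth v = k := by omega
      rw [this, hk]
  · left; rw [← hk, T.iterate_ge_depth u k (by omega)]

lemma desc_depth_le {v u : V} (h : T.Desc v u) : T.depth v ≤ T.depth u := by
  rcases T.desc_canonical h with h | h
  · rw [h, T.depth_root]; omega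
  · exact h.1

lemma desc_eq_of_depth {v u : V} (h : T.Desc v u) (hd : T.depth v = T.depth u) : v = u := by
  rcases T.desc_canonical h with h' | h'
  · subst h'
    rw [T.depth_root] at hd
    exact (T.depth_eq_zero_iff.mp hd.symm).symm
  · have : T.depth u - T.depth v = 0 := by omega
    rw [this] at h'
    exact h'.2.symm

lemma desc_depth_lt {v u : V} (h : T.Desc v u) (hne : u ≠ v) : T.depth v < T.depth u := by
  have := T.desc_depth_le h
  rcases lt_or_eq_of_le this with h' | h'
  · exact h'
  · exact absurd (T.desc_eq_of_depth h h') (fun e => hne e.symm)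

lemma mem_children_iff {v c : V} : c ∈ T.children v ↔ T.parent c = v ∧ c ≠ T.root := by
  simp [children]

lemma child_depth {v c : V} (h : c ∈ T.children v) : T.depth c = T.depth v + 1 := by
  rw [mem_children_iff] at h
  have := T.depth_parent c h.2
  rw [h.1] at this; omega

lemma desc_child {v c : V} (h : c ∈ T.children v) : T.Desc v c :=
  ⟨1, by simpa using (T.mem_children_iff.mp h).1⟩

lemma topchild_unique {v c c' u : V} (hc : c ∈ T.children v) (hc' : c' ∈ T.children v)
    (h : T.Desc c u) (h' : T.Desc c' u) : c = c' := by
  have hcr := (T.mem_children_iff.mp hc).2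
  have hc'r := (T.mem_children_iff.mp hc').2
  rcases T.desc_canonical h with e | e; · exact absurd e hcr
  rcases T.desc_canonical h' with e' | e'; · exact absurd e' hc'r
  have hd : T.depth c = T.depth c' := by rw [T.child_depth hc, T.child_depth hc']
  rw [← e.2, ← e'.2, hd]

lemma exists_topchild {v u : V} (h : T.Desc v u) (hne : u ≠ v) :
    ∃ c ∈ T.children v, T.Desc c u := by
  have hlt := T.desc_depth_lt h hne
  rcases T.desc_canonical h with e | e
  · -- v = root
    subst e
    set k := T.depth u - T.depth T.root with hk
    have hk' : T.depth T.root ≤ T.depth u := T.desc_depth_le h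
    have hkk : T.parent^[T.depth u] u = T.root := T.iterate_depth_parent u
    have h1 : 1 ≤ T.depth u := by rw [T.depth_root] at hlt; omega
    refine ⟨T.parent^[T.depth u - 1] u, ?_, ⟨T.depth u - 1, rfl⟩⟩
    rw [mem_children_iff]
    constructor
    · have hs : T.parent (T.parent^[T.depth u - 1] u) = T.parent^[T.depth u - 1 + 1] u :=
        (Function.iterate_succ_apply' _ _ _).symm
      rw [hs, show T.depth u - 1 + 1 = T.depth u by omega, hkk]
    · intro hr
      have := T.depth_iterate u (T.depth u - 1) (by omega)
      rw [hr, T.depth_root] at this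
      omega
  · obtain ⟨hle, hit⟩ := e
    set k := T.depth u - T.depth v with hk
    have h1 : 1 ≤ k := by omega
    refine ⟨T.parent^[k - 1] u, ?_, ⟨k - 1, rfl⟩⟩
    rw [mem_children_iff]
    have hd : T.depth (T.parent^[k-1] u) = T.depth u - (k - 1) := T.depth_iterate u _ (by omega)
    constructor
    · have hs : T.parent (T.parent^[k - 1] u) = T.parent^[k - 1 + 1] u :=
        (Function.iterate_succ_apply' _ _ _).symm
      rw [hs, show k - 1 + 1 = k by omega, hit]
    · intro hr
      rw [hr, T.depth_root] at hd
      omega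

lemma desc_parent {c u : V} (h : T.Desc c u) (hne : u ≠ c) : T.Desc c (T.parent u) := by
  obtain ⟨k, hk⟩ := h
  cases k with
  | zero => exact absurd hk hne
  | succ n => exact ⟨n, by rw [← Function.iterate_succ_apply, hk]⟩

lemma child_desc_eq {v c u : V} (hu : u ∈ T.children v) (hc : c ∈ T.children v)
    (h : T.Desc c u) : u = c :=
  T.topchild_unique hu hc (T.desc_refl u) h




set_option linter.unusedSectionVars false

variable {V : Type*} [Fintype V] [DecidableEq V]


variable (T : RTree V) (w : V → ℝ)

lemma desc_ne_root {c u : V} (hc : c ≠ T.root) (h : T.Desc c u) : u ≠ T.root := by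
  rintro rfl
  obtain ⟨k, hk⟩ := h
  rw [T.iterate_parent_root] at hk
  exact hc hk.symm

lemma subtree_disj {v c c' u : V} (hc : c ∈ T.children v) (hc' : c' ∈ T.children v)
    (hne : c ≠ c') (h : T.Desc c u) : ¬ T.Desc c' u :=
  fun h' => hne (T.topchild_unique hc hc' h h')

lemma strict_desc_facts {v c u : V} (hc : c ∈ T.children v) (h : T.Desc c u) (hne : u ≠ c) :
    u ≠ v ∧ T.parent u ≠ v := by
  have hdv : T.depth c = T.depth v + 1 := T.child_depth hc
  have h1 : T.depth c < T.depth u := T.desc_depth_lt h hne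
  constructor
  · intro e; subst e; omega
  · intro hp
    have hur : u ≠ T.root := T.desc_ne_root (T.mem_children_iff.mp hc).2 h
    have hu : u ∈ T.children v := T.mem_children_iff.mpr ⟨hp, hur⟩
    exact hne (T.child_desc_eq hu hc h)

lemma bddAbove_wSum (p q : Finset V → Prop) :
    BddAbove {x | ∃ M, p M ∧ q M ∧ x = wSum w M} := by
  apply Set.Finite.bddAbove
  apply Set.Finite.subset (Finset.finite_toSet (Finset.image (wSum w) Finset.univ.powerset))
  rintro x ⟨M, -, -, rfl⟩
  simp only [Finset.coe_image, Set.mem_image, Finset.mem_coe, Finset.mem_powerset]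
  exact ⟨M, by simp, rfl⟩

lemma le_Fval {v : V} {M : Finset V} (h : T.IsSubtreeMatching v M)
    (he : ∃ c ∈ M, T.parent c = v) : wSum w M ≤ T.Fval w v :=
  le_csSup (bddAbove_wSum w _ _) ⟨M, h, he, rfl⟩

lemma le_Gval {v : V} {M : Finset V} (h : T.IsSubtreeMatching v M)
    (he : ∀ c ∈ M, T.parent c ≠ v) : wSum w M ≤ T.Gval w v :=
  le_csSup (bddAbove_wSum w _ _) ⟨M, h, he, rfl⟩

lemma empty_subtree_matching (v : V) : T.IsSubtreeMatching v ∅ := by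
  refine ⟨⟨?_, ?_⟩, ?_⟩ <;> simp

lemma Gval_nonneg (v : V) : 0 ≤ T.Gval w v := by
  have := T.le_Gval w (M := ∅) (v := v) (T.empty_subtree_matching v) (by simp)
  simpa [wSum] using this

lemma Fval_le {v : V} {a : ℝ} (ha : 0 ≤ a)
    (h : ∀ M, T.IsSubtreeMatching v M → (∃ c ∈ M, T.parent c = v) → wSum w M ≤ a) :
    T.Fval w v ≤ a :=
  Real.sSup_le (by rintro x ⟨M, h1, h2, rfl⟩; exact h M h1 h2) ha

lemma Gval_le {v : V} {a : ℝ} (ha : 0 ≤ a)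
    (h : ∀ M, T.IsSubtreeMatching v M → (∀ c ∈ M, T.parent c ≠ v) → wSum w M ≤ a) :
    T.Gval w v ≤ a :=
  Real.sSup_le (by rintro x ⟨M, h1, h2, rfl⟩; exact h M h1 h2) ha

lemma wSum_le_max {v : V} {M : Finset V} (h : T.IsSubtreeMatching v M) :
    wSum w M ≤ max (T.Fval w v) (T.Gval w v) := by
  by_cases he : ∃ c ∈ M, T.parent c = v
  · exact le_trans (T.le_Fval w h he) (le_max_left _ _)
  · push_neg at he
    exact le_trans (T.le_Gval w h he) (le_max_right _ _)

lemma max_FG_nonneg (v : V) : 0 ≤ max (T.Fval w v) (T.Gval w v) :=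
  le_trans (T.Gval_nonneg w v) (le_max_right _ _)

lemma union_matching {v : V} {K : V → Finset V}
    (hK : ∀ c ∈ T.children v, T.IsSubtreeMatching c (K c)) :
    T.IsSubtreeMatching v ((T.children v).biUnion K) ∧
    (∀ u ∈ (T.children v).biUnion K, T.parent u ≠ v) ∧
    wSum w ((T.children v).biUnion K) = ∑ c ∈ T.children v, wSum w (K c) := by
  set B := (T.children v).biUnion K with hB
  have mem : ∀ u ∈ B, ∃ c ∈ T.children v, u ∈ K c := by
    intro u hu; rw [hB] at hu; simpa using hu
  have facts : ∀ c ∈ T.children v, ∀ u ∈ K c,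
      T.Desc c u ∧ u ≠ c ∧ u ≠ T.root ∧ T.Desc c (T.parent u) := by
    intro c hc u hu
    obtain ⟨⟨hroot, _⟩, hdesc⟩ := hK c hc
    obtain ⟨hd, hne⟩ := hdesc u hu
    exact ⟨hd, hne, hroot u hu, T.desc_parent hd hne⟩
  have pair : ∀ c ∈ T.children v, ∀ c' ∈ T.children v, ∀ u ∈ K c, ∀ u' ∈ K c', u ≠ u' →
      T.parent u ≠ T.parent u' ∧ T.parent u ≠ u' ∧ u ≠ T.parent u' := by
    intro c hc c' hc' u hu u' hu' hne
    by_cases hcc : c = c'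
    · subst hcc
      exact (hK c hc).1.2 u hu u' hu' hne
    · obtain ⟨hd, -, -, hdp⟩ := facts c hc u hu
      obtain ⟨hd', -, -, hdp'⟩ := facts c' hc' u' hu'
      refine ⟨?_, ?_, ?_⟩ <;> intro e
      · exact T.subtree_disj hc hc' hcc hdp (e ▸ hdp')
      · exact T.subtree_disj hc hc' hcc hdp (e ▸ hd')
      · exact T.subtree_disj hc hc' hcc hd (e ▸ hdp')
  refine ⟨⟨⟨?_, ?_⟩, ?_⟩, ?_, ?_⟩
  · intro u hu
    obtain ⟨c, hc, huc⟩ := mem u hu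
    exact (facts c hc u huc).2.2.1
  · intro u hu u' hu' hne
    obtain ⟨c, hc, huc⟩ := mem u hu
    obtain ⟨c', hc', huc'⟩ := mem u' hu'
    exact pair c hc c' hc' u huc u' huc' hne
  · intro u hu
    obtain ⟨c, hc, huc⟩ := mem u hu
    obtain ⟨hd, hne, -, -⟩ := facts c hc u huc
    exact ⟨T.desc_trans (T.desc_child hc) hd, (T.strict_desc_facts hc hd hne).1⟩
  · intro u hu
    obtain ⟨c, hc, huc⟩ := mem u hu
    obtain ⟨hd, hne, -, -⟩ := facts c hc u huc
    exact (T.strict_desc_facts hc hd hne).2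
  · rw [hB]
    unfold wSum
    apply Finset.sum_biUnion
    intro c hc c' hc' hcc
    rw [Finset.mem_coe] at hc hc'
    apply Finset.disjoint_left.mpr
    intro u hu hu'
    exact T.subtree_disj hc hc' hcc (facts c hc u hu).1 (facts c' hc' u hu').1

lemma assemble {v m : V} (hm : m ∈ T.children v) {Bm : Finset V}
    (hBm : T.IsSubtreeMatching m Bm) (hBm' : ∀ u ∈ Bm, T.parent u ≠ m)
    {K : V → Finset V} (hK : ∀ c ∈ (T.children v).erase m, T.IsSubtreeMatching c (K c)) :
    T.IsSubtreeMatching v (insert m (((T.children v).erase m).biUnion K ∪ Bm)) ∧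
    T.parent m = v ∧
    wSum w (insert m (((T.children v).erase m).biUnion K ∪ Bm)) =
      w m + (∑ c ∈ (T.children v).erase m, wSum w (K c)) + wSum w Bm := by
  classical
  set K' : V → Finset V := fun c => if c = m then Bm else K c with hK'def
  have hBeq : ((T.children v).erase m).biUnion K ∪ Bm = (T.children v).biUnion K' := by
    ext u
    simp only [Finset.mem_union, Finset.mem_biUnion, Finset.mem_erase, hK'def]
    constructor
    · rintro (⟨c, ⟨hcm, hc⟩, hu⟩ | hu)
      · exact ⟨c, hc, by simp [hcm, hu]⟩
      · exact ⟨m, hm, by simp [hu]⟩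
    · rintro ⟨c, hc, hu⟩
      by_cases hcm : c = m
      · subst hcm; simp only [if_pos rfl] at hu; exact Or.inr hu
      · exact Or.inl ⟨c, ⟨hcm, hc⟩, by simpa [hcm] using hu⟩
  have hK'good : ∀ c ∈ T.children v, T.IsSubtreeMatching c (K' c) := by
    intro c hc
    by_cases hcm : c = m
    · subst hcm; simp only [hK'def, if_pos rfl]; exact hBm
    · simp only [hK'def, if_neg hcm]; exact hK c (Finset.mem_erase.mpr ⟨hcm, hc⟩)
  obtain ⟨hBmatch, hBnoedge, hBsum⟩ := T.union_matching w hK'good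
  set B := (T.children v).biUnion K' with hB
  have hmv : T.parent m = v := (T.mem_children_iff.mp hm).1
  have hmroot : m ≠ T.root := (T.mem_children_iff.mp hm).2
  have hnotm : ∀ u ∈ B, u ≠ m ∧ T.parent u ≠ m := by
    intro u hu
    rw [hB, Finset.mem_biUnion] at hu
    obtain ⟨c, hc, hu⟩ := hu
    by_cases hcm : c = m
    · subst hcm
      simp only [hK'def, if_pos rfl] at hu
      exact ⟨(hBm.2 u hu).2, hBm' u hu⟩
    · simp only [hK'def, if_neg hcm] at hu
      obtain ⟨⟨hroot, _⟩, hdesc⟩ := hK c (Finset.mem_erase.mpr ⟨hcm, hc⟩)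
      obtain ⟨hd, hne⟩ := hdesc u hu
      constructor
      · intro e; subst e
        exact hcm (T.child_desc_eq hm hc hd).symm
      · intro e
        have hdp := T.desc_parent hd hne
        rw [e] at hdp
        exact hcm (T.child_desc_eq hm hc hdp).symm
  have hmnotB : m ∉ B := fun h => (hnotm m h).1 rfl
  have hmnev : m ≠ v := by
    have := T.child_depth hm; intro e; rw [e] at this; omega
  rw [hBeq]
  refine ⟨⟨⟨?_, ?_⟩, ?_⟩, hmv, ?_⟩
  · intro u hu
    rcases Finset.mem_insert.mp hu with rfl | hu
    · exact hmroot
    · exact hBmatch.1.1 u hu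
  · intro u hu u' hu' hne
    rcases Finset.mem_insert.mp hu with rfl | hu <;>
      rcases Finset.mem_insert.mp hu' with rfl | hu'
    · exact absurd rfl hne
    · obtain ⟨h1, h2⟩ := hnotm u' hu'
      have h3 := (hBmatch.2 u' hu').2
      have h4 := hBnoedge u' hu'
      refine ⟨?_, ?_, fun e => h2 e.symm⟩
      · rw [hmv]; exact fun e => h4 e.symm
      · rw [hmv]; exact fun e => h3 e.symm
    · obtain ⟨h1, h2⟩ := hnotm u hu
      have h3 := (hBmatch.2 u hu).2
      have h4 := hBnoedge u hu
      refine ⟨by rw [hmv]; exact h4, h2, by rw [hmv]; exact h3⟩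
    · exact hBmatch.1.2 u hu u' hu' hne
  · intro u hu
    rcases Finset.mem_insert.mp hu with rfl | hu
    · exact ⟨T.desc_child hm, hmnev⟩
    · exact hBmatch.2 u hu
  · rw [show wSum w (insert m B) = w m + wSum w B from Finset.sum_insert hmnotB, hBsum]
    have h5 : ∑ c ∈ T.children v, wSum w (K' c) =
        wSum w (K' m) + ∑ c ∈ (T.children v).erase m, wSum w (K' c) := by
      rw [← Finset.add_sum_erase _ _ hm]
    rw [h5]
    have h6 : ∑ c ∈ (T.children v).erase m, wSum w (K' c) =
        ∑ c ∈ (T.children v).erase m, wSum w (K c) := by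
      apply Finset.sum_congr rfl
      intro c hc
      rw [hK'def]
      simp only [if_neg (Finset.mem_erase.mp hc).1]
    rw [h6]
    simp only [hK'def, if_pos rfl]
    ring

open Classical in
noncomputable def res (T : RTree V) (c : V) (M : Finset V) : Finset V :=
  M.filter fun u => T.Desc c u ∧ u ≠ c

def top (T : RTree V) (v : V) (M : Finset V) : Finset V :=
  M.filter fun u => T.parent u = v

lemma mem_res {c u : V} {M : Finset V} : u ∈ T.res c M ↔ u ∈ M ∧ T.Desc c u ∧ u ≠ c := by
  classical
  simp [res]

lemma mem_top {v u : V} {M : Finset V} : u ∈ T.top v M ↔ u ∈ M ∧ T.parent u = v := by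
  simp [top]

lemma matching_subset {M M' : Finset V} (h : T.IsTreeMatching M) (hs : M' ⊆ M) :
    T.IsTreeMatching M' :=
  ⟨fun c hc => h.1 c (hs hc), fun c hc c' hc' => h.2 c (hs hc) c' (hs hc')⟩

lemma res_matching {v c : V} {M : Finset V} (hM : T.IsSubtreeMatching v M) :
    T.IsSubtreeMatching c (T.res c M) :=
  ⟨T.matching_subset hM.1 (fun u hu => (T.mem_res.mp hu).1),
   fun u hu => (T.mem_res.mp hu).2⟩

lemma res_no_edge {c : V} {M : Finset V} (hM : T.IsTreeMatching M) (hc : c ∈ M) :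
    ∀ u ∈ T.res c M, T.parent u ≠ c := by
  intro u hu e
  obtain ⟨huM, hd, hne⟩ := T.mem_res.mp hu
  exact (hM.2 c hc u huM (fun h => hne h.symm)).2.2 e.symm

lemma wSum_decomp {v : V} {M : Finset V} (hM : T.IsSubtreeMatching v M) :
    wSum w M = wSum w (T.top v M) + ∑ c ∈ T.children v, wSum w (T.res c M) := by
  classical
  have hset : M = T.top v M ∪ (T.children v).biUnion (fun c => T.res c M) := by
    ext u
    simp only [Finset.mem_union, Finset.mem_biUnion, T.mem_top, T.mem_res]
    constructor
    · intro hu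
      obtain ⟨hd, hne⟩ := hM.2 u hu
      obtain ⟨c, hc, hdc⟩ := T.exists_topchild hd hne
      by_cases huc : u = c
      · subst huc; exact Or.inl ⟨hu, (T.mem_children_iff.mp hc).1⟩
      · exact Or.inr ⟨c, hc, hu, hdc, huc⟩
    · rintro (⟨h, -⟩ | ⟨c, -, h, -⟩) <;> exact h
  have hdisj : Disjoint (T.top v M) ((T.children v).biUnion (fun c => T.res c M)) := by
    rw [Finset.disjoint_left]
    intro u hu hu'
    obtain ⟨huM, hpu⟩ := T.mem_top.mp hu
    rw [Finset.mem_biUnion] at hu'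
    obtain ⟨c, hc, hu'⟩ := hu'
    obtain ⟨-, hd, hne⟩ := T.mem_res.mp hu'
    have hur : u ≠ T.root := hM.1.1 u huM
    have hu_child : u ∈ T.children v := T.mem_children_iff.mpr ⟨hpu, hur⟩
    exact hne (T.child_desc_eq hu_child hc hd)
  have hpd : ∀ c ∈ T.children v, ∀ c' ∈ T.children v, c ≠ c' →
      Disjoint (T.res c M) (T.res c' M) := by
    intro c hc c' hc' hcc
    rw [Finset.disjoint_left]
    intro u hu hu'
    exact T.subtree_disj hc hc' hcc (T.mem_res.mp hu).2.1 (T.mem_res.mp hu').2.1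
  conv_lhs => rw [hset]
  unfold wSum
  rw [Finset.sum_union hdisj, Finset.sum_biUnion]
  intro c hc c' hc' hcc
  rw [Finset.mem_coe] at hc hc'
  exact hpd c hc c' hc' hcc

lemma top_empty {v : V} {M : Finset V} (h : ∀ u ∈ M, T.parent u ≠ v) : T.top v M = ∅ := by
  rw [Finset.eq_empty_iff_forall_notMem]
  intro u hu
  obtain ⟨h1, h2⟩ := T.mem_top.mp hu
  exact h u h1 h2

lemma top_singleton {v e : V} {M : Finset V} (hM : T.IsTreeMatching M) (he : e ∈ M)
    (hpe : T.parent e = v) : T.top v M = {e} := by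
  ext u
  rw [T.mem_top, Finset.mem_singleton]
  constructor
  · rintro ⟨hu, hpu⟩
    by_contra hne
    exact (hM.2 u hu e he hne).1 (hpu.trans hpe.symm)
  · rintro rfl; exact ⟨he, hpe⟩

lemma depth_lt_card (u : V) : T.depth u < Fintype.card V := by
  have hinj : Function.Injective (fun k : Fin (T.depth u + 1) => T.parent^[(k : ℕ)] u) := by
    intro a b hab
    have ha := T.depth_iterate u a (Nat.lt_succ_iff.mp a.isLt)
    have hb := T.depth_iterate u b (Nat.lt_succ_iff.mp b.isLt)
    simp only at hab
    rw [hab, hb] at ha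
    have ha' := Nat.lt_succ_iff.mp a.isLt
    have hb' := Nat.lt_succ_iff.mp b.isLt
    apply Fin.ext
    omega
  have := Fintype.card_le_of_injective _ hinj
  simp only [Fintype.card_fin] at this
  omega


end RTree

namespace RTree

variable {V : Type*} [Fintype V] [DecidableEq V]

/-- The child of `v` maximizing `w c + G(c) - max(F c, G c)` (ties broken arbitrarily);
defaults to the root if `v` has no children. -/
noncomputable def bestChild (T : RTree V) (w : V → ℝ) (v : V) : V :=
  if h : (T.children v).Nonempty then
    Classical.choose ((T.children v).exists_max_image
      (fun c => w c + T.Gval w c - max (T.Fval w c) (T.Gval w c)) h)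
  else T.root

open Classical in
/-- The fuel-indexed top-down activation rule of the `T-MWM` algorithm: at `v`, if
`F(v) ≥ G(v)` (and `v` is internal), activate the edge `(v, m)` where `m` is the
best child, then recurse on the subtrees of the other children of `v` and on the
children of `m`; otherwise recurse on the subtrees of all children of `v`. -/
noncomputable def build (T : RTree V) (w : V → ℝ) : ℕ → V → Finset V
  | 0, _ => ∅
  | n + 1, v =>
    if (T.children v).Nonempty ∧ T.Gval w v ≤ T.Fval w v then
      insert (T.bestChild w v)
        (((T.children v).erase (T.bestChild w v)).biUnion (T.build w n) ∪
          (T.children (T.bestChild w v)).biUnion (T.build w n))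
    else (T.children v).biUnion (T.build w n)

/-- The edge set `M*` constructed by the T-MWM algorithm, starting from the root
(with enough fuel to exhaust the tree). -/
noncomputable def mstar (T : RTree V) (w : V → ℝ) : Finset V :=
  T.build w (Fintype.card V) T.root

set_option linter.unusedSectionVars false

variable (T : RTree V) (w : V → ℝ)

lemma bestChild_spec {v : V} (h : (T.children v).Nonempty) :
    T.bestChild w v ∈ T.children v ∧ ∀ c ∈ T.children v,
      w c + T.Gval w c - max (T.Fval w c) (T.Gval w c) ≤
        w (T.bestChild w v) + T.Gval w (T.bestChild w v) -
          max (T.Fval w (T.bestChild w v)) (T.Gval w (T.bestChild w v)) := by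
  rw [bestChild, dif_pos h]
  exact Classical.choose_spec ((T.children v).exists_max_image
    (fun c => w c + T.Gval w c - max (T.Fval w c) (T.Gval w c)) h)

lemma Gval_eq {v : V}
    (hopt : ∀ c ∈ T.children v, ∃ Mc, T.IsSubtreeMatching c Mc ∧
      wSum w Mc = max (T.Fval w c) (T.Gval w c)) :
    T.Gval w v = ∑ c ∈ T.children v, max (T.Fval w c) (T.Gval w c) ∧
    ∃ Mg, T.IsSubtreeMatching v Mg ∧ (∀ u ∈ Mg, T.parent u ≠ v) ∧
      wSum w Mg = ∑ c ∈ T.children v, max (T.Fval w c) (T.Gval w c) := by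
  classical
  choose K hK1 hK2 using hopt
  set K' : V → Finset V := fun c => if h : c ∈ T.children v then K c h else ∅ with hK'
  have hgood : ∀ c ∈ T.children v, T.IsSubtreeMatching c (K' c) := by
    intro c hc; simp only [hK', dif_pos hc]; exact hK1 c hc
  obtain ⟨hmatch, hnoedge, hsum⟩ := T.union_matching w hgood
  have hsum' : wSum w ((T.children v).biUnion K') =
      ∑ c ∈ T.children v, max (T.Fval w c) (T.Gval w c) := by
    rw [hsum]
    apply Finset.sum_congr rfl
    intro c hc
    simp only [hK', dif_pos hc]
    exact hK2 c hc
  have hub : T.Gval w v ≤ ∑ c ∈ T.children v, max (T.Fval w c) (T.Gval w c) := by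
    apply T.Gval_le w (Finset.sum_nonneg fun c _ => T.max_FG_nonneg w c)
    intro M hM hMe
    rw [T.wSum_decomp w hM, T.top_empty hMe]
    have h0 : wSum w (∅ : Finset V) = 0 := by simp [wSum]
    rw [h0, zero_add]
    exact Finset.sum_le_sum fun c _ => T.wSum_le_max w (T.res_matching hM)
  have hlb := T.le_Gval w hmatch hnoedge
  rw [hsum'] at hlb
  exact ⟨le_antisymm hub hlb, _, hmatch, hnoedge, hsum'⟩

lemma Fval_le_best {v : V} (hw : ∀ u, u ≠ T.root → 0 < w u) (h : (T.children v).Nonempty) :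
    T.Fval w v ≤ w (T.bestChild w v) + T.Gval w (T.bestChild w v) +
      ∑ c ∈ (T.children v).erase (T.bestChild w v), max (T.Fval w c) (T.Gval w c) := by
  obtain ⟨hmem, hbest⟩ := T.bestChild_spec w h
  set m := T.bestChild w v with hmdef
  have hsplitm : ∑ c ∈ T.children v, max (T.Fval w c) (T.Gval w c) =
      max (T.Fval w m) (T.Gval w m) +
        ∑ c ∈ (T.children v).erase m, max (T.Fval w c) (T.Gval w c) :=
    (Finset.add_sum_erase _ _ hmem).symm
  have hnn : 0 ≤ w m + T.Gval w m +
      ∑ c ∈ (T.children v).erase m, max (T.Fval w c) (T.Gval w c) := by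
    have h1 : 0 < w m := hw m (T.mem_children_iff.mp hmem).2
    have h2 := T.Gval_nonneg w m
    have h3 : 0 ≤ ∑ c ∈ (T.children v).erase m, max (T.Fval w c) (T.Gval w c) :=
      Finset.sum_nonneg fun c _ => T.max_FG_nonneg w c
    linarith
  apply T.Fval_le w hnn
  intro M hM hMe
  obtain ⟨e, he, hpe⟩ := hMe
  have her : e ≠ T.root := hM.1.1 e he
  have hec : e ∈ T.children v := T.mem_children_iff.mpr ⟨hpe, her⟩
  rw [T.wSum_decomp w hM, T.top_singleton hM.1 he hpe]
  have htop : wSum w ({e} : Finset V) = w e := by simp [wSum]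
  rw [htop]
  have hsplit : ∑ c ∈ T.children v, wSum w (T.res c M) =
      wSum w (T.res e M) + ∑ c ∈ (T.children v).erase e, wSum w (T.res c M) :=
    (Finset.add_sum_erase _ _ hec).symm
  have hsplite : ∑ c ∈ T.children v, max (T.Fval w c) (T.Gval w c) =
      max (T.Fval w e) (T.Gval w e) +
        ∑ c ∈ (T.children v).erase e, max (T.Fval w c) (T.Gval w c) :=
    (Finset.add_sum_erase _ _ hec).symm
  have hres_e : wSum w (T.res e M) ≤ T.Gval w e :=
    T.le_Gval w (T.res_matching hM) (T.res_no_edge hM.1 he)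
  have hsum_le : ∑ c ∈ (T.children v).erase e, wSum w (T.res c M) ≤
      ∑ c ∈ (T.children v).erase e, max (T.Fval w c) (T.Gval w c) :=
    Finset.sum_le_sum fun c _ => T.wSum_le_max w (T.res_matching hM)
  have hGe : T.Gval w e ≤ max (T.Fval w e) (T.Gval w e) := le_max_right _ _
  have hkey := hbest e hec
  rw [hsplit]
  linarith

lemma Fval_of_no_children {v : V} (h : T.children v = ∅) : T.Fval w v = 0 := by
  have hempty : {x | ∃ M, T.IsSubtreeMatching v M ∧ (∃ c ∈ M, T.parent c = v) ∧
      x = wSum w M} = ∅ := by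
    ext x
    simp only [Set.mem_setOf_eq, Set.mem_empty_iff_false, iff_false]
    rintro ⟨M, hM, ⟨e, he, hpe⟩, rfl⟩
    have hmem : e ∈ T.children v := T.mem_children_iff.mpr ⟨hpe, hM.1.1 e he⟩
    rw [h] at hmem
    exact Finset.notMem_empty e hmem
  rw [Fval, hempty, Real.sSup_empty]

lemma main (hw : ∀ u, u ≠ T.root → 0 < w u) :
    ∀ n, ∀ v, (∀ u, T.Desc v u → T.depth u < T.depth v + n) →
      T.IsSubtreeMatching v (T.build w n v) ∧
        wSum w (T.build w n v) = max (T.Fval w v) (T.Gval w v) := by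
  intro n
  induction n with
  | zero =>
    intro v hb
    exact absurd (hb v (T.desc_refl v)) (by omega)
  | succ n ih =>
    intro v hb
    have hch_bound : ∀ c ∈ T.children v, ∀ u, T.Desc c u → T.depth u < T.depth c + n := by
      intro c hc u hu
      have h1 := hb u (T.desc_trans (T.desc_child hc) hu)
      have h2 := T.child_depth hc
      omega
    have IHc := fun c hc => ih c (hch_bound c hc)
    have hopt : ∀ c ∈ T.children v, ∃ Mc, T.IsSubtreeMatching c Mc ∧
        wSum w Mc = max (T.Fval w c) (T.Gval w c) :=
      fun c hc => ⟨T.build w n c, (IHc c hc).1, (IHc c hc).2⟩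
    by_cases hcond : (T.children v).Nonempty ∧ T.Gval w v ≤ T.Fval w v
    · obtain ⟨hne, hGF⟩ := hcond
      obtain ⟨hmem, hbest⟩ := T.bestChild_spec w hne
      set m := T.bestChild w v with hmdef
      have hchm_bound : ∀ d ∈ T.children m, ∀ u, T.Desc d u → T.depth u < T.depth d + n := by
        intro d hd u hu
        have h1 := hb u (T.desc_trans (T.desc_child hmem) (T.desc_trans (T.desc_child hd) hu))
        have h2 := T.child_depth hd
        have h3 := T.child_depth hmem
        omega
      have IHd := fun d hd => ih d (hchm_bound d hd)
      have hoptm : ∀ d ∈ T.children m, ∃ Md, T.IsSubtreeMatching d Md ∧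
          wSum w Md = max (T.Fval w d) (T.Gval w d) :=
        fun d hd => ⟨T.build w n d, (IHd d hd).1, (IHd d hd).2⟩
      obtain ⟨hGm, -⟩ := T.Gval_eq w hoptm
      obtain ⟨hB2match, hB2noedge, hB2sum⟩ := T.union_matching w (fun d hd => (IHd d hd).1)
      have hB2sum' : wSum w ((T.children m).biUnion (T.build w n)) = T.Gval w m := by
        rw [hB2sum, hGm]
        exact Finset.sum_congr rfl fun d hd => (IHd d hd).2
      have hKgood : ∀ c ∈ (T.children v).erase m, T.IsSubtreeMatching c (T.build w n c) :=
        fun c hc => (IHc c (Finset.mem_erase.mp hc).2).1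
      obtain ⟨hMmatch, hMedge, hMsum⟩ := T.assemble w hmem hB2match hB2noedge hKgood
      have hMsum' : wSum w (insert m (((T.children v).erase m).biUnion (T.build w n) ∪
          (T.children m).biUnion (T.build w n))) =
          w m + (∑ c ∈ (T.children v).erase m, max (T.Fval w c) (T.Gval w c)) + T.Gval w m := by
        rw [hMsum, hB2sum']
        congr 2
        exact Finset.sum_congr rfl fun c hc => (IHc c (Finset.mem_erase.mp hc).2).2
      have hbuild : T.build w (n+1) v = insert m (((T.children v).erase m).biUnion (T.build w n) ∪
          (T.children m).biUnion (T.build w n)) := by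
        rw [build, if_pos ⟨hne, hGF⟩]
      rw [hbuild]
      refine ⟨hMmatch, ?_⟩
      have hFle := T.Fval_le_best w hw hne
      have hFge : w m + T.Gval w m +
          ∑ c ∈ (T.children v).erase m, max (T.Fval w c) (T.Gval w c) ≤ T.Fval w v := by
        have hmm := T.le_Fval w hMmatch ⟨m, Finset.mem_insert_self m _, hMedge⟩
        rw [hMsum'] at hmm
        linarith
      rw [hMsum', max_eq_left hGF]
      linarith
    · have hbuild : T.build w (n+1) v = (T.children v).biUnion (T.build w n) := by
        rw [build, if_neg hcond]
      obtain ⟨hmatch, hnoedge, hsum⟩ := T.union_matching w (fun c hc => (IHc c hc).1)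
      obtain ⟨hGv, -⟩ := T.Gval_eq w hopt
      have hsum' : wSum w ((T.children v).biUnion (T.build w n)) = T.Gval w v := by
        rw [hsum, hGv]
        exact Finset.sum_congr rfl fun c hc => (IHc c hc).2
      rw [hbuild]
      refine ⟨hmatch, ?_⟩
      have hFG : T.Fval w v ≤ T.Gval w v := by
        by_cases hne : (T.children v).Nonempty
        · have hx : ¬ T.Gval w v ≤ T.Fval w v := fun h => hcond ⟨hne, h⟩
          linarith
        · rw [Finset.not_nonempty_iff_eq_empty] at hne
          rw [T.Fval_of_no_children w hne]
          exact T.Gval_nonneg w v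
      rw [hsum', max_eq_right hFG]


end RTree

theorem stmt11 {V : Type*} [Fintype V] [DecidableEq V] (T : RTree V) (w : V → ℝ)
    (hw : ∀ v, v ≠ T.root → 0 < w v) :
    RTree.wSum w (T.mstar w) = max (T.Fval w T.root) (T.Gval w T.root) ∧
      T.IsTreeMatching (T.mstar w) ∧
      ∀ M, T.IsTreeMatching M → RTree.wSum w M ≤ RTree.wSum w (T.mstar w) := by
  have hb : ∀ u, T.Desc T.root u → T.depth u < T.depth T.root + Fintype.card V := by
    intro u _
    rw [T.depth_root]
    have := T.depth_lt_card u
    omega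
  obtain ⟨hmatch, hsum⟩ := T.main w hw (Fintype.card V) T.root hb
  have hms : T.mstar w = T.build w (Fintype.card V) T.root := rfl
  rw [hms]
  refine ⟨hsum, hmatch.1, ?_⟩
  intro M hM
  have hsub : T.IsSubtreeMatching T.root M :=
    ⟨hM, fun c hc => ⟨⟨T.depth c, T.iterate_depth_parent c⟩, hM.1 c hc⟩⟩
  have hle := T.wSum_le_max w hsub
  rw [← hsum] at hle
  exact hle
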